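/- arXiv:1809.10767 — 2 statements merged into one kernel-verified Lean document; each statement's English description precedes it below -/
import Mathlib

section
/- For any integer n ≥ 1, the Steiner 3-Wiener index of the Lucas cube satisfies SW_3(Λ_n) = (n/2) · F_{n−1} · F_{n+1} · (L_n − 2). -/
/-- The Steiner distance of a set `S` of vertices of `G`: the minimum number of edges
of a connected subgraph of `G` containing all vertices of `S`. -/
noncomputable def steinerDist {V : Type*} (G : SimpleGraph V) (S : Set V) : ℕ :=
  sInf {n | ∃ H : G.Subgraph, H.Connected ∧ S ⊆ H.verts ∧ H.edgeSet.ncard = n}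
/-- The Steiner `k`-Wiener index of `G`: the sum of the Steiner distances of all
`k`-element subsets of vertices of `G`. -/
noncomputable def steinerWiener {V : Type*} (G : SimpleGraph V) [Fintype V] (k : ℕ) : ℕ :=
  ∑ S ∈ (Finset.univ : Finset V).powersetCard k, steinerDist G (S : Set V)
/-- The `n`-dimensional hypercube `Q_n`: vertices are binary strings of length `n`,
two strings being adjacent iff they differ in exactly one position. -/
def hypercube (n : ℕ) : SimpleGraph (Fin n → Bool) where
  Adj a b := (Finset.univ.filter fun i => a i ≠ b i).card = 1
  symm := by
    constructor
    intro a b h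
    have hc : (Finset.univ.filter fun i => b i ≠ a i) =
        (Finset.univ.filter fun i => a i ≠ b i) := by
      apply Finset.filter_congr
      intro i _
      simp [ne_comm]
    rw [hc]
    exact h
  loopless := by
    constructor
    intro a h
    simp at h

/-- A Fibonacci string of length `n`: a binary string with no two consecutive ones. -/
def fibWord (n : ℕ) (b : Fin n → Bool) : Prop :=
  ∀ i j : Fin n, (j : ℕ) = (i : ℕ) + 1 → ¬(b i = true ∧ b j = true)

instance (n : ℕ) : DecidablePred (fibWord n) := fun b =>
  inferInstanceAs (Decidable
    (∀ i j : Fin n, (j : ℕ) = (i : ℕ) + 1 → ¬(b i = true ∧ b j = true)))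

/-- The Fibonacci cube `Γ_n`: the subgraph of the hypercube `Q_n` induced by the
Fibonacci strings of length `n`. -/
def fibonacciCube (n : ℕ) : SimpleGraph {b : Fin n → Bool // fibWord n b} :=
  (hypercube n).comap Subtype.val
/-- A Lucas string of length `n`: a Fibonacci string whose first and last entries are
not both one. -/
def lucasWord (n : ℕ) (b : Fin n → Bool) : Prop :=
  fibWord n b ∧
    ∀ i j : Fin n, (i : ℕ) = 0 → (j : ℕ) = n - 1 → ¬(b i = true ∧ b j = true)

instance (n : ℕ) : DecidablePred (lucasWord n) := fun b =>
  inferInstanceAs (Decidable (fibWord n b ∧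
    ∀ i j : Fin n, (i : ℕ) = 0 → (j : ℕ) = n - 1 → ¬(b i = true ∧ b j = true)))

/-- The Lucas cube `Λ_n`: the subgraph of the hypercube `Q_n` induced by the Lucas
strings of length `n`. -/
def lucasCube (n : ℕ) : SimpleGraph {b : Fin n → Bool // lucasWord n b} :=
  (hypercube n).comap Subtype.val

/-- The Lucas numbers: `L_0 = 2`, `L_1 = 1`, `L_n = L_{n-1} + L_{n-2}`. -/
def lucasNum : ℕ → ℕ
  | 0 => 2
  | 1 => 1
  | n + 2 => lucasNum (n + 1) + lucasNum n

/-- Hamming distance -/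
def ham {n : ℕ} (u v : Fin n → Bool) : ℕ := (Finset.univ.filter fun i => u i ≠ v i).card

/-- cyclic successor -/
def nxt {n : ℕ} (hn : 0 < n) (i : Fin n) : Fin n := ⟨((i:ℕ)+1) % n, Nat.mod_lt _ hn⟩

lemma nxt_val_of_lt {n : ℕ} (hn : 0 < n) {i : Fin n} (h : (i:ℕ) + 1 < n) :
    ((nxt hn i : Fin n) : ℕ) = (i:ℕ) + 1 := by
  simp [nxt, Nat.mod_eq_of_lt h]

lemma nxt_val_of_last {n : ℕ} (hn : 0 < n) {i : Fin n} (h : (i:ℕ) = n - 1) :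
    ((nxt hn i : Fin n) : ℕ) = 0 := by
  have : n - 1 + 1 = n := by omega
  simp [nxt, h, this]

lemma lucas_iff_cyclic {n : ℕ} (hn : 0 < n) (b : Fin n → Bool) :
    lucasWord n b ↔ ∀ i : Fin n, ¬(b i = true ∧ b (nxt hn i) = true) := by
  constructor
  · rintro ⟨hf, hw⟩ i
    by_cases hi : (i : ℕ) + 1 < n
    · exact hf i (nxt hn i) (nxt_val_of_lt hn hi)
    · have hival : (i : ℕ) = n - 1 := by have := i.isLt; omega
      rintro ⟨h2, h3⟩
      exact hw (nxt hn i) i (nxt_val_of_last hn hival) hival ⟨h3, h2⟩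
  · intro h
    constructor
    · intro i j hij hc
      have hlt : (i : ℕ) + 1 < n := by have := j.isLt; omega
      have : j = nxt hn i := Fin.ext (by rw [nxt_val_of_lt hn hlt, hij])
      exact h i ⟨hc.1, this ▸ hc.2⟩
    · intro i j hi hj hc
      have : i = nxt hn j := Fin.ext (by rw [nxt_val_of_last hn hj, hi])
      exact h j ⟨hc.2, this ▸ hc.1⟩

/-- turning ones off preserves Lucas words -/
lemma lucas_mono {n : ℕ} {b c : Fin n → Bool} (hb : lucasWord n b)
    (h : ∀ i, c i = true → b i = true) : lucasWord n c := by
  rcases Nat.eq_zero_or_pos n with h0 | hn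
  · subst h0
    exact ⟨fun i => i.elim0, fun i => i.elim0⟩
  · rw [lucas_iff_cyclic hn] at hb ⊢
    intro i hc
    exact hb i ⟨h _ hc.1, h _ hc.2⟩

-- ham basics
namespace LucasAux

variable {n : ℕ}

lemma ham_comm (u v : Fin n → Bool) : ham u v = ham v u := by
  unfold ham
  congr 1
  apply Finset.filter_congr
  intro i _
  simp [ne_comm]

lemma ham_self (u : Fin n → Bool) : ham u u = 0 := by
  simp [ham]

lemma ham_eq_zero_iff {u v : Fin n → Bool} : ham u v = 0 ↔ u = v := by
  simp only [ham, Finset.card_eq_zero, Finset.filter_eq_empty_iff]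
  constructor
  · intro h; funext i; by_contra hq; exact h (Finset.mem_univ i) hq
  · intro h i _; simp [h]

lemma filter_update {u v : Fin n → Bool} {i : Fin n} (h : u i ≠ v i) :
    (Finset.univ.filter fun j => Function.update u i (v i) j ≠ v j)
      = (Finset.univ.filter fun j => u j ≠ v j).erase i := by
  ext j
  by_cases hj : j = i
  · subst hj; simp [Function.update_self]
  · simp [Function.update_of_ne hj, hj]

lemma ham_update {u v : Fin n → Bool} {i : Fin n} (h : u i ≠ v i) :
    ham (Function.update u i (v i)) v = ham u v - 1 := by
  unfold ham
  rw [filter_update h]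
  rw [Finset.card_erase_of_mem (by simp [h])]

lemma ham_update_self {u : Fin n → Bool} {i : Fin n} {c : Bool} (h : c ≠ u i) :
    ham u (Function.update u i c) = 1 := by
  unfold ham
  rw [show (Finset.univ.filter fun j => u j ≠ Function.update u i c j) = {i} from ?_]
  · simp
  · ext j
    by_cases hj : j = i
    · subst hj; simp [Function.update_self, Ne.symm h]
    · simp [Function.update_of_ne hj, hj]

lemma lucasCube_adj {x y : {b : Fin n → Bool // lucasWord n b}} :
    (lucasCube n).Adj x y ↔ ham x.1 y.1 = 1 := Iff.rfl

/-- existence of a geodesic-length walk in the Lucas cube -/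
lemma exists_walk (k : ℕ) : ∀ (x y : {b : Fin n → Bool // lucasWord n b}),
    ham x.1 y.1 = k → ∃ w : (lucasCube n).Walk x y, w.length = k := by
  induction k with
  | zero =>
    intro x y h
    have : x = y := Subtype.ext (ham_eq_zero_iff.mp h)
    subst this
    exact ⟨SimpleGraph.Walk.nil, rfl⟩
  | succ k ih =>
    intro x y h
    -- pick a coordinate to flip
    have hne : ∃ i, x.1 i ≠ y.1 i := by
      by_contra hq
      push_neg at hq
      have : ham x.1 y.1 = 0 := ham_eq_zero_iff.mpr (funext hq)
      omega
    have key : ∃ i, x.1 i ≠ y.1 i ∧ lucasWord n (Function.update x.1 i (y.1 i)) := by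
      by_cases hA : ∃ i, x.1 i = true ∧ y.1 i = false
      · obtain ⟨i, hxi, hyi⟩ := hA
        refine ⟨i, by simp [hxi, hyi], ?_⟩
        apply lucas_mono x.2
        intro j hj
        by_cases hji : j = i
        · subst hji; rw [Function.update_self] at hj; rw [hyi] at hj; exact absurd hj (by simp)
        · rwa [Function.update_of_ne hji] at hj
      · push_neg at hA
        obtain ⟨i, hi⟩ := hne
        refine ⟨i, hi, ?_⟩
        apply lucas_mono y.2
        intro j hj
        by_cases hji : j = i
        · subst hji; rwa [Function.update_self] at hj
        · rw [Function.update_of_ne hji] at hj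
          have := hA j
          cases hxj : x.1 j
          · rw [hxj] at hj; exact absurd hj (by simp)
          · have := this hxj
            cases hyj : y.1 j
            · exact absurd hyj this
            · rfl
      done
    obtain ⟨i, hi, hlucas⟩ := key
    set x' : {b : Fin n → Bool // lucasWord n b} := ⟨Function.update x.1 i (y.1 i), hlucas⟩
    have hadj : (lucasCube n).Adj x x' := by
      rw [lucasCube_adj]
      exact ham_update_self (Ne.symm hi)
    have hham : ham x'.1 y.1 = k := by
      have := ham_update hi
      simp only [x']
      omega
    obtain ⟨w, hw⟩ := ih x' y hham
    exact ⟨SimpleGraph.Walk.cons hadj w, by simp [hw]⟩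

end LucasAux

namespace LucasAux

variable {n : ℕ}

def maj (a b c : Bool) : Bool := (a && b) || (a && c) || (b && c)

lemma maj_adj (a b c a' b' c' : Bool) (h : maj a b c = true ∧ maj a' b' c' = true) :
    (a = true ∧ a' = true) ∨ (b = true ∧ b' = true) ∨ (c = true ∧ c' = true) := by
  revert h; revert a b c a' b' c'; decide

lemma count_id1 (a b c : Bool) :
    ((if a ≠ maj a b c then 1 else 0) + (if b ≠ maj a b c then 1 else 0)
      + (if c ≠ maj a b c then 1 else 0) : ℕ) = if ¬(a = b ∧ a = c) then 1 else 0 := by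
  revert a b c; decide

lemma count_id2 (a b c : Bool) :
    ((if a ≠ b then 1 else 0) + (if a ≠ c then 1 else 0) + (if b ≠ c then 1 else 0) : ℕ)
      = 2 * (if ¬(a = b ∧ a = c) then 1 else 0) := by
  revert a b c; decide

lemma ham_eq_sum (u v : Fin n → Bool) : ham u v = ∑ i, if u i ≠ v i then 1 else 0 := by
  unfold ham; rw [Finset.card_filter]

def splitcount (u v w : Fin n → Bool) : ℕ :=
  (Finset.univ.filter fun i => ¬(u i = v i ∧ u i = w i)).card

lemma splitcount_eq_sum (u v w : Fin n → Bool) :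
    splitcount u v w = ∑ i, if ¬(u i = v i ∧ u i = w i) then 1 else 0 := by
  unfold splitcount; rw [Finset.card_filter]

/-- the median of three Lucas words is a Lucas word -/
lemma lucas_maj {u v w : Fin n → Bool} (hu : lucasWord n u) (hv : lucasWord n v)
    (hw : lucasWord n w) : lucasWord n (fun i => maj (u i) (v i) (w i)) := by
  rcases Nat.eq_zero_or_pos n with h0 | hn
  · subst h0; exact ⟨fun i => i.elim0, fun i => i.elim0⟩
  rw [lucas_iff_cyclic hn] at hu hv hw ⊢
  intro i hi
  rcases maj_adj _ _ _ _ _ _ hi with h | h | h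
  · exact hu i h
  · exact hv i h
  · exact hw i h

lemma ham_maj_sum (u v w : Fin n → Bool) :
    ham u (fun i => maj (u i) (v i) (w i)) + ham v (fun i => maj (u i) (v i) (w i))
      + ham w (fun i => maj (u i) (v i) (w i)) = splitcount u v w := by
  rw [ham_eq_sum, ham_eq_sum, ham_eq_sum, splitcount_eq_sum, ← Finset.sum_add_distrib,
    ← Finset.sum_add_distrib]
  exact Finset.sum_congr rfl fun i _ => count_id1 (u i) (v i) (w i)

lemma two_splitcount (u v w : Fin n → Bool) :
    ham u v + ham u w + ham v w = 2 * splitcount u v w := by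
  rw [ham_eq_sum, ham_eq_sum, ham_eq_sum, splitcount_eq_sum, ← Finset.sum_add_distrib,
    ← Finset.sum_add_distrib, Finset.mul_sum]
  exact Finset.sum_congr rfl fun i _ => count_id2 (u i) (v i) (w i)

end LucasAux

namespace LucasAux

variable {n : ℕ}

lemma exists_flip_edge (H : (lucasCube n).Subgraph) (hH : H.Connected)
    {a b : {b : Fin n → Bool // lucasWord n b}} (ha : a ∈ H.verts) (hb : b ∈ H.verts)
    {i : Fin n} (hab : a.1 i ≠ b.1 i) :
    ∃ p q, H.Adj p q ∧ p.1 i ≠ q.1 i := by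
  obtain ⟨wk⟩ := hH ⟨a, ha⟩ ⟨b, hb⟩
  clear hH
  revert hab
  have : ∀ (x y : H.verts) (w : H.coe.Walk x y), x.1.1 i ≠ y.1.1 i →
      ∃ p q, H.Adj p q ∧ p.1 i ≠ q.1 i := by
    intro x y w
    induction w with
    | nil => intro h; exact absurd rfl h
    | cons h p ih =>
      intro hxy
      rename_i x' z' y'
      by_cases hxz : x'.1.1 i = z'.1.1 i
      · exact ih (by rw [← hxz]; exact hxy)
      · exact ⟨x'.1, z'.1, (H.coe_adj x' z') ▸ h, hxz⟩
  exact fun hab => this _ _ wk hab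

/-- the set of coordinates flipped by an edge, as a symmetric function -/
def flipSet : Sym2 {b : Fin n → Bool // lucasWord n b} → Finset (Fin n) :=
  Sym2.lift ⟨fun p q => Finset.univ.filter fun t => p.1 t ≠ q.1 t,
    fun p q => by ext t; simp [ne_comm]⟩

lemma lower_bound (H : (lucasCube n).Subgraph) (hH : H.Connected)
    {u v w : {b : Fin n → Bool // lucasWord n b}}
    (hu : u ∈ H.verts) (hv : v ∈ H.verts) (hw : w ∈ H.verts) :
    splitcount u.1 v.1 w.1 ≤ H.edgeSet.ncard := by
  classical
  set T := Finset.univ.filter fun i => ¬(u.1 i = v.1 i ∧ u.1 i = w.1 i) with hT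
  have hfin : H.edgeSet.Finite := Set.toFinite _
  have hsub : T ⊆ hfin.toFinset.biUnion flipSet := by
    intro i hi
    rw [hT, Finset.mem_filter] at hi
    have hPi : ∃ p q, H.Adj p q ∧ p.1 i ≠ q.1 i := by
      by_cases huv : u.1 i = v.1 i
      · exact exists_flip_edge H hH hu hw fun hc => hi.2 ⟨huv, hc⟩
      · exact exists_flip_edge H hH hu hv huv
    obtain ⟨p, q, hadj, hflip⟩ := hPi
    rw [Finset.mem_biUnion]
    refine ⟨s(p, q), ?_, ?_⟩
    · rw [Set.Finite.mem_toFinset]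
      exact SimpleGraph.Subgraph.mem_edgeSet.mpr hadj
    · simp [flipSet, hflip]
  have hcard1 : ∀ e ∈ hfin.toFinset, (flipSet e).card = 1 := by
    intro e he
    rw [Set.Finite.mem_toFinset] at he
    induction e with
    | _ p q =>
      have hadj : (lucasCube n).Adj p q := H.adj_sub (SimpleGraph.Subgraph.mem_edgeSet.mp he)
      rw [lucasCube_adj] at hadj
      exact hadj
  calc splitcount u.1 v.1 w.1 = T.card := rfl
    _ ≤ (hfin.toFinset.biUnion flipSet).card := Finset.card_le_card hsub
    _ ≤ ∑ e ∈ hfin.toFinset, (flipSet e).card := Finset.card_biUnion_le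
    _ = ∑ _e ∈ hfin.toFinset, 1 := Finset.sum_congr rfl hcard1
    _ = hfin.toFinset.card := by simp
    _ = H.edgeSet.ncard := (Set.ncard_eq_toFinset_card _ hfin).symm

end LucasAux

namespace LucasAux

variable {n : ℕ}

lemma walk_toSubgraph_ncard {x y : {b : Fin n → Bool // lucasWord n b}}
    (w : (lucasCube n).Walk x y) : w.toSubgraph.edgeSet.ncard ≤ w.length := by
  rw [SimpleGraph.Walk.edgeSet_toSubgraph]
  have : w.edgeSet = ↑w.edges.toFinset := by ext e; simp [SimpleGraph.Walk.edgeSet]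
  rw [this, Set.ncard_coe_finset]
  calc w.edges.toFinset.card ≤ w.edges.length := List.toFinset_card_le _
    _ = w.length := w.length_edges

lemma sub_connected_sup {V : Type*} {G : SimpleGraph V} {H K : G.Subgraph}
    (hH : H.Connected) (hK : K.Connected) (hn : (H ⊓ K).verts.Nonempty) :
    (H ⊔ K).Connected :=
  SimpleGraph.Subgraph.connected_sup hH.preconnected hK.preconnected hn

lemma upper_bound (u v w : {b : Fin n → Bool // lucasWord n b}) :
    ∃ H : (lucasCube n).Subgraph, H.Connected ∧ ({u, v, w} : Set _) ⊆ H.verts ∧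
      H.edgeSet.ncard ≤ splitcount u.1 v.1 w.1 := by
  set m : {b : Fin n → Bool // lucasWord n b} :=
    ⟨fun i => maj (u.1 i) (v.1 i) (w.1 i), lucas_maj u.2 v.2 w.2⟩ with hm
  obtain ⟨w1, hw1⟩ := exists_walk (ham u.1 m.1) u m rfl
  obtain ⟨w2, hw2⟩ := exists_walk (ham v.1 m.1) v m rfl
  obtain ⟨w3, hw3⟩ := exists_walk (ham w.1 m.1) w m rfl
  refine ⟨w1.toSubgraph ⊔ w2.toSubgraph ⊔ w3.toSubgraph, ?_, ?_, ?_⟩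
  · apply sub_connected_sup
    · apply sub_connected_sup
        w1.toSubgraph_connected w2.toSubgraph_connected
      exact ⟨m, w1.end_mem_verts_toSubgraph, w2.end_mem_verts_toSubgraph⟩
    · exact w3.toSubgraph_connected
    · exact ⟨m, Or.inl w1.end_mem_verts_toSubgraph, w3.end_mem_verts_toSubgraph⟩
  · intro x hx
    rcases hx with hx | hx | hx
    · exact Or.inl (Or.inl (hx ▸ w1.start_mem_verts_toSubgraph))
    · exact Or.inl (Or.inr (hx ▸ w2.start_mem_verts_toSubgraph))
    · exact Or.inr (hx ▸ w3.start_mem_verts_toSubgraph)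
  · rw [SimpleGraph.Subgraph.edgeSet_sup, SimpleGraph.Subgraph.edgeSet_sup]
    calc (w1.toSubgraph.edgeSet ∪ w2.toSubgraph.edgeSet ∪ w3.toSubgraph.edgeSet).ncard
        ≤ (w1.toSubgraph.edgeSet ∪ w2.toSubgraph.edgeSet).ncard
            + w3.toSubgraph.edgeSet.ncard := Set.ncard_union_le _ _
      _ ≤ w1.toSubgraph.edgeSet.ncard + w2.toSubgraph.edgeSet.ncard
            + w3.toSubgraph.edgeSet.ncard := by
          have := Set.ncard_union_le w1.toSubgraph.edgeSet w2.toSubgraph.edgeSet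
          omega
      _ ≤ w1.length + w2.length + w3.length := by
          have h1 := walk_toSubgraph_ncard w1
          have h2 := walk_toSubgraph_ncard w2
          have h3 := walk_toSubgraph_ncard w3
          omega
      _ = splitcount u.1 v.1 w.1 := by
          rw [hw1, hw2, hw3]
          exact ham_maj_sum u.1 v.1 w.1

lemma steinerDist_triple (u v w : {b : Fin n → Bool // lucasWord n b}) :
    steinerDist (lucasCube n) {u, v, w} = splitcount u.1 v.1 w.1 := by
  obtain ⟨H0, hc, hs, hcard⟩ := upper_bound u v w
  apply le_antisymm
  · exact le_trans (Nat.sInf_le ⟨H0, hc, hs, rfl⟩) hcard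
  · refine le_csInf ⟨H0.edgeSet.ncard, H0, hc, hs, rfl⟩ ?_
    rintro e ⟨H, hc', hs', rfl⟩
    exact lower_bound H hc' (hs' (by simp)) (hs' (by simp)) (hs' (by simp))

end LucasAux

namespace LucasAux

open Finset

/-- split any count over binary strings by the first bit -/
lemma card_cons_split {k : ℕ} (P : (Fin (k + 1) → Bool) → Prop) [DecidablePred P] :
    (univ.filter P).card
      = (univ.filter fun c : Fin k → Bool => P (Fin.cons false c)).card
        + (univ.filter fun c : Fin k → Bool => P (Fin.cons true c)).card := by
  rw [Finset.card_filter, Finset.card_filter, Finset.card_filter]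
  rw [← Equiv.sum_comp (Fin.consEquiv (fun _ => Bool))
    (fun b => if P b then (1:ℕ) else 0)]
  rw [Fintype.sum_prod_type, Fintype.sum_bool]
  rw [add_comm]
  rfl

lemma fib_cons {k : ℕ} (x : Bool) (c : Fin (k + 1) → Bool) :
    fibWord (k + 2) (Fin.cons x c) ↔ fibWord (k + 1) c ∧ ¬(x = true ∧ c 0 = true) := by
  constructor
  · intro hf
    refine ⟨?_, ?_⟩
    · intro i j hij hc
      refine hf i.succ j.succ (by simp [hij]) ?_
      simpa [Fin.cons_succ] using hc
    · intro hc
      refine hf 0 (Fin.succ 0) (by simp) ?_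
      simpa [Fin.cons_zero, Fin.cons_succ] using hc
  · rintro ⟨hc, hx⟩ i j hij
    induction i using Fin.cases with
    | zero =>
      induction j using Fin.cases with
      | zero => simp at hij
      | succ j' =>
        have : j' = 0 := by
          apply Fin.ext
          simpa using hij
        subst this
        simpa [Fin.cons_zero, Fin.cons_succ] using hx
    | succ i' =>
      induction j using Fin.cases with
      | zero => simp at hij
      | succ j' =>
        have hij' : (j' : ℕ) = (i' : ℕ) + 1 := by simpa using hij
        simpa [Fin.cons_succ] using hc i' j' hij'

lemma lucas_cons_false {k : ℕ} (c : Fin (k + 1) → Bool) :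
    lucasWord (k + 2) (Fin.cons false c) ↔ fibWord (k + 1) c := by
  constructor
  · intro h
    exact ((fib_cons false c).mp h.1).1
  · intro h
    refine ⟨(fib_cons false c).mpr ⟨h, by simp⟩, ?_⟩
    intro i j hi _ hc
    have : i = 0 := Fin.ext hi
    subst this
    rw [Fin.cons_zero] at hc
    exact absurd hc.1 (by simp)

lemma lucas_cons_true {k : ℕ} (c : Fin (k + 1) → Bool) :
    lucasWord (k + 2) (Fin.cons true c)
      ↔ fibWord (k + 1) c ∧ c 0 = false ∧ c (Fin.last k) = false := by
  have hlast : (Fin.cons true c : Fin (k+2) → Bool) (Fin.succ (Fin.last k)) = c (Fin.last k) :=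
    Fin.cons_succ ..
  constructor
  · intro h
    have h1 := (fib_cons true c).mp h.1
    refine ⟨h1.1, ?_, ?_⟩
    · cases hc0 : c 0
      · rfl
      · exact absurd ⟨rfl, hc0⟩ h1.2
    · cases hcl : c (Fin.last k)
      · rfl
      · exfalso
        refine h.2 0 (Fin.succ (Fin.last k)) rfl ?_ ⟨rfl, by rw [hlast, hcl]⟩
        simp [Fin.val_succ, Fin.last]
  · rintro ⟨hf, h0, hl⟩
    refine ⟨(fib_cons true c).mpr ⟨hf, fun hc => by rw [h0] at hc; exact absurd hc.2 (by simp)⟩, ?_⟩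
    intro i j hi hj hc
    have hi0 : i = 0 := Fin.ext hi
    have hjl : j = Fin.succ (Fin.last k) := by
      apply Fin.ext
      rw [hj]
      simp [Fin.val_succ, Fin.last]
    subst hi0; subst hjl
    rw [hlast, hl] at hc
    exact absurd hc.2 (by simp)

/-- number of Fibonacci strings of length `k` -/
def fcount (k : ℕ) : ℕ := (univ.filter fun b : Fin k → Bool => fibWord k b).card

/-- number of Fibonacci strings with first and last bit zero -/
def qcount (k : ℕ) : ℕ :=
  (univ.filter fun b : Fin (k+1) → Bool =>
    fibWord (k+1) b ∧ b 0 = false ∧ b (Fin.last k) = false).card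

/-- reversal preserves Fibonacci strings -/
lemma fib_rev {k : ℕ} {c : Fin k → Bool} (h : fibWord k c) : fibWord k (c ∘ Fin.rev) := by
  intro i j hij hc
  refine h j.rev i.rev ?_ ⟨hc.2, hc.1⟩
  have hi := i.isLt
  have hj := j.isLt
  simp [Fin.rev, hij] at *
  omega

lemma gF_count : ∀ k : ℕ,
    (univ.filter fun c : Fin (k+1) → Bool => fibWord (k+1) c ∧ c 0 = false).card = fcount k
  | 0 => by decide
  | (k+1) => by
    rw [card_cons_split (fun b : Fin (k+2) → Bool => fibWord (k+2) b ∧ b 0 = false)]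
    have h1 : (univ.filter fun c : Fin (k+1) → Bool =>
        fibWord (k+2) (Fin.cons false c) ∧ (Fin.cons false c : Fin (k+2) → Bool) 0 = false).card
        = fcount (k+1) := by
      unfold fcount
      congr 1
      apply Finset.filter_congr
      intro c _
      rw [Fin.cons_zero, fib_cons]
      simp
    have h2 : (univ.filter fun c : Fin (k+1) → Bool =>
        fibWord (k+2) (Fin.cons true c) ∧ (Fin.cons true c : Fin (k+2) → Bool) 0 = false).card
        = 0 := by
      rw [Finset.card_eq_zero, Finset.filter_eq_empty_iff]
      intro c _
      simp
    rw [h1, h2]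
    omega

lemma fcount_succ_succ (k : ℕ) : fcount (k + 2) = fcount (k + 1) + fcount k := by
  unfold fcount
  rw [card_cons_split (fun b : Fin (k+2) → Bool => fibWord (k+2) b)]
  have h1 : (univ.filter fun c : Fin (k+1) → Bool => fibWord (k+2) (Fin.cons false c)).card
      = fcount (k+1) := by
    unfold fcount
    congr 1
    apply Finset.filter_congr
    intro c _
    simp only [fib_cons]
    simp
  have h2 : (univ.filter fun c : Fin (k+1) → Bool => fibWord (k+2) (Fin.cons true c)).card
      = fcount k := by
    rw [← gF_count k]
    congr 1
    apply Finset.filter_congr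
    intro c _
    rw [fib_cons]
    constructor
    · rintro ⟨hf, hx⟩
      refine ⟨hf, ?_⟩
      cases hc : c 0
      · rfl
      · exact absurd ⟨rfl, hc⟩ hx
    · rintro ⟨hf, h0⟩
      refine ⟨hf, ?_⟩
      rintro ⟨-, hc⟩
      rw [h0] at hc
      exact absurd hc (by simp)
  rw [h1, h2]
  rfl

lemma fcount_eq : ∀ k : ℕ, fcount k = Nat.fib (k + 2)
  | 0 => by decide
  | 1 => by decide
  | (k+2) => by
    rw [fcount_succ_succ, fcount_eq (k+1), fcount_eq k]
    have h := Nat.fib_add_two (n := k+2)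
    simp only [show k+1+2 = k+3 from by omega, show k+2+1 = k+3 from by omega,
      show k+2+2 = k+4 from by omega] at h ⊢
    omega

/-- last-bit-zero count via reversal -/
lemma rcount_eq (k : ℕ) :
    (univ.filter fun c : Fin (k+1) → Bool => fibWord (k+1) c ∧ c (Fin.last k) = false).card
      = fcount k := by
  rw [← gF_count k]
  apply Finset.card_bij' (fun c _ => c ∘ Fin.rev) (fun c _ => c ∘ Fin.rev)
  · intro c hc
    rw [Finset.mem_filter] at hc ⊢
    refine ⟨Finset.mem_univ _, fib_rev hc.2.1, ?_⟩
    show c (Fin.rev 0) = false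
    rw [Fin.rev_zero]
    exact hc.2.2
  · intro c hc
    rw [Finset.mem_filter] at hc ⊢
    refine ⟨Finset.mem_univ _, fib_rev hc.2.1, ?_⟩
    show c (Fin.rev (Fin.last k)) = false
    rw [Fin.rev_last]
    exact hc.2.2
  · intro c _
    funext j
    simp [Function.comp, Fin.rev_rev]
  · intro c _
    funext j
    simp [Function.comp, Fin.rev_rev]

lemma qcount_succ (k : ℕ) : qcount (k + 1) = fcount k := by
  unfold qcount
  rw [card_cons_split (fun b : Fin (k+2) → Bool =>
    fibWord (k+2) b ∧ b 0 = false ∧ b (Fin.last (k+1)) = false)]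
  have h2 : (univ.filter fun c : Fin (k+1) → Bool =>
      fibWord (k+2) (Fin.cons true c) ∧ (Fin.cons true c : Fin (k+2) → Bool) 0 = false
        ∧ (Fin.cons true c : Fin (k+2) → Bool) (Fin.last (k+1)) = false).card = 0 := by
    rw [Finset.card_eq_zero, Finset.filter_eq_empty_iff]
    intro c _
    simp
  have h1 : (univ.filter fun c : Fin (k+1) → Bool =>
      fibWord (k+2) (Fin.cons false c) ∧ (Fin.cons false c : Fin (k+2) → Bool) 0 = false
        ∧ (Fin.cons false c : Fin (k+2) → Bool) (Fin.last (k+1)) = false).card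
      = fcount k := by
    rw [← rcount_eq k]
    congr 1
    apply Finset.filter_congr
    intro c _
    rw [← Fin.succ_last, Fin.cons_succ, Fin.cons_zero]
    rw [fib_cons]
    simp
  rw [h1, h2]
  omega

lemma qcount_eq : ∀ k : ℕ, qcount k = Nat.fib (k + 1)
  | 0 => by decide
  | (k+1) => by rw [qcount_succ, fcount_eq]

/-- total number of Lucas words -/
def Ncount (n : ℕ) : ℕ := (univ.filter fun b : Fin n → Bool => lucasWord n b).card

lemma Ncount_eq (k : ℕ) : Ncount (k + 2) = Nat.fib (k + 3) + Nat.fib (k + 1) := by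
  unfold Ncount
  rw [card_cons_split (fun b : Fin (k+2) → Bool => lucasWord (k+2) b)]
  have h1 : (univ.filter fun c : Fin (k+1) → Bool => lucasWord (k+2) (Fin.cons false c)).card
      = Nat.fib (k + 3) := by
    rw [← fcount_eq (k+1)]
    unfold fcount
    congr 1
    apply Finset.filter_congr
    intro c _
    simp only [lucas_cons_false]
  have h2 : (univ.filter fun c : Fin (k+1) → Bool => lucasWord (k+2) (Fin.cons true c)).card
      = Nat.fib (k + 1) := by
    rw [← qcount_eq k]
    unfold qcount
    congr 1
    apply Finset.filter_congr
    intro c _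
    simp only [lucas_cons_true]
  rw [h1, h2]

/-- number of Lucas words with a one at position `i` -/
def acount (n : ℕ) (i : Fin n) : ℕ :=
  (univ.filter fun b : Fin n → Bool => lucasWord n b ∧ b i = true).card

lemma lucas_rot {n : ℕ} [NeZero n] {b : Fin n → Bool} (i : Fin n) (h : lucasWord n b) :
    lucasWord n (fun j => b (j + i)) := by
  have hn : 0 < n := Nat.pos_of_ne_zero (NeZero.ne n)
  rw [lucas_iff_cyclic hn] at h ⊢
  intro j hj
  have key : nxt hn j + i = nxt hn (j + i) := by
    apply Fin.ext
    show ((((j:ℕ) + 1) % n) + (i:ℕ)) % n = (((j:ℕ) + (i:ℕ)) % n + 1) % n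
    rw [Nat.mod_add_mod, Nat.mod_add_mod]
    ring_nf
  rw [key] at hj
  exact h (j + i) hj

lemma acount_eq_acount_zero {n : ℕ} [NeZero n] (i : Fin n) : acount n i = acount n 0 := by
  unfold acount
  apply Finset.card_bij' (fun b _ => fun j : Fin n => b (j + i))
    (fun b _ => fun j : Fin n => b (j - i))
  · intro b hb
    rw [Finset.mem_filter] at hb ⊢
    refine ⟨Finset.mem_univ _, lucas_rot i hb.2.1, ?_⟩
    show b (0 + i) = true
    rw [zero_add]
    exact hb.2.2
  · intro b hb
    rw [Finset.mem_filter] at hb ⊢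
    have : (fun j : Fin n => b (j - i)) = fun j : Fin n => b (j + (-i)) := by
      funext j; rw [sub_eq_add_neg]
    refine ⟨Finset.mem_univ _, this ▸ lucas_rot (-i) hb.2.1, ?_⟩
    show b (i - i) = true
    rw [sub_self]
    exact hb.2.2
  · intro b _
    funext j
    simp
  · intro b _
    funext j
    simp

lemma acount_zero_eq (k : ℕ) : acount (k + 2) (0 : Fin (k+2)) = Nat.fib (k + 1) := by
  unfold acount
  rw [card_cons_split (fun b : Fin (k+2) → Bool => lucasWord (k+2) b ∧ b 0 = true)]
  have h1 : (univ.filter fun c : Fin (k+1) → Bool =>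
      lucasWord (k+2) (Fin.cons false c) ∧ (Fin.cons false c : Fin (k+2) → Bool) 0 = true).card
      = 0 := by
    rw [Finset.card_eq_zero, Finset.filter_eq_empty_iff]
    intro c _
    simp
  have h2 : (univ.filter fun c : Fin (k+1) → Bool =>
      lucasWord (k+2) (Fin.cons true c) ∧ (Fin.cons true c : Fin (k+2) → Bool) 0 = true).card
      = Nat.fib (k + 1) := by
    rw [← qcount_eq k]
    unfold qcount
    congr 1
    apply Finset.filter_congr
    intro c _
    rw [Fin.cons_zero]
    rw [lucas_cons_true]
    simp
  rw [h1, h2]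
  omega

lemma acount_eq {n : ℕ} (hn : 2 ≤ n) (i : Fin n) : acount n i = Nat.fib (n - 1) := by
  obtain ⟨k, rfl⟩ : ∃ k, n = k + 2 := ⟨n - 2, by omega⟩
  haveI : NeZero (k + 2) := ⟨by omega⟩
  rw [acount_eq_acount_zero i, acount_zero_eq]
  exact congrArg Nat.fib (by omega)

lemma Ncount_eq' {n : ℕ} (hn : 2 ≤ n) : Ncount n = Nat.fib (n + 1) + Nat.fib (n - 1) := by
  obtain ⟨k, rfl⟩ : ∃ k, n = k + 2 := ⟨n - 2, by omega⟩
  rw [Ncount_eq, show k+2+1 = k+3 from by omega, show k+2-1 = k+1 from by omega]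

lemma lucasNum_eq : ∀ m : ℕ, lucasNum (m + 1) = Nat.fib (m + 2) + Nat.fib m
  | 0 => by decide
  | 1 => by decide
  | (m+2) => by
    show lucasNum (m + 2) + lucasNum (m + 1) = _
    rw [lucasNum_eq (m+1), lucasNum_eq m]
    have h1 := Nat.fib_add_two (n := m+2)
    have h2 := Nat.fib_add_two (n := m+1)
    have h3 := Nat.fib_add_two (n := m)
    simp only [show m+1+2 = m+3 from by omega, show m+2+1 = m+3 from by omega,
      show m+2+2 = m+4 from by omega, show m+1+1 = m+2 from by omega] at h1 h2 h3 ⊢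
    omega

end LucasAux

namespace LucasAux

open Finset

variable {n : ℕ}

abbrev LV (n : ℕ) := {b : Fin n → Bool // lucasWord n b}

lemma card_filter_subtype (q : (Fin n → Bool) → Prop) [DecidablePred q] :
    (univ.filter fun y : LV n => q y.1).card
      = (univ.filter fun b : Fin n → Bool => lucasWord n b ∧ q b).card := by
  apply Finset.card_bij (fun y _ => y.1)
  · intro y hy
    rw [Finset.mem_filter] at hy ⊢
    exact ⟨Finset.mem_univ _, y.2, hy.2⟩
  · intro y _ z _ h
    exact Subtype.ext h
  · intro b hb
    rw [Finset.mem_filter] at hb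
    exact ⟨⟨b, hb.2.1⟩, by simp [hb.2.2], rfl⟩

lemma card_LV : Fintype.card (LV n) = Ncount n := by
  rw [Fintype.card_subtype]
  rfl

lemma aS_eq (i : Fin n) :
    (univ.filter fun y : LV n => y.1 i = true).card = acount n i := by
  unfold acount
  exact card_filter_subtype (fun b => b i = true)

lemma inner_sum (i : Fin n) (x : LV n) :
    ∑ y : LV n, (if x.1 i ≠ y.1 i then 1 else 0)
      = if x.1 i = true then Fintype.card (LV n) - acount n i else acount n i := by
  have hpart := Finset.card_filter_add_card_filter_not
    (s := (univ : Finset (LV n))) (p := fun y : LV n => y.1 i = true)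
  rw [Finset.card_univ] at hpart
  rw [← Finset.card_filter]
  cases hx : x.1 i
  · rw [if_neg (by simp)]
    rw [← aS_eq i]
    congr 1
    apply Finset.filter_congr
    intro y _
    cases hy : y.1 i <;> simp [hy]
  · rw [if_pos rfl]
    have he : (univ.filter fun y : LV n => ¬(true = y.1 i)).card
        = (univ.filter fun y : LV n => ¬(y.1 i = true)).card := by
      congr 1
      apply Finset.filter_congr
      intro y _
      cases hy : y.1 i <;> simp [hy]
    have haS := aS_eq (n := n) i
    calc (univ.filter fun y : LV n => true ≠ y.1 i).card
        = (univ.filter fun y : LV n => ¬(y.1 i = true)).card := he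
      _ = Fintype.card (LV n) - acount n i := by omega

lemma pair_sum_eq :
    ∑ x : LV n, ∑ y : LV n, ham x.1 y.1
      = ∑ i : Fin n, 2 * acount n i * (Fintype.card (LV n) - acount n i) := by
  have h1 : ∀ x : LV n, ∑ y : LV n, ham x.1 y.1
      = ∑ i : Fin n, ∑ y : LV n, (if x.1 i ≠ y.1 i then 1 else 0) := by
    intro x
    rw [Finset.sum_comm]
    exact Finset.sum_congr rfl fun y _ => ham_eq_sum x.1 y.1
  calc ∑ x : LV n, ∑ y : LV n, ham x.1 y.1
      = ∑ x : LV n, ∑ i : Fin n, ∑ y : LV n, (if x.1 i ≠ y.1 i then 1 else 0) :=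
        Finset.sum_congr rfl fun x _ => h1 x
    _ = ∑ i : Fin n, ∑ x : LV n, ∑ y : LV n, (if x.1 i ≠ y.1 i then 1 else 0) :=
        Finset.sum_comm
    _ = ∑ i : Fin n, 2 * acount n i * (Fintype.card (LV n) - acount n i) := by
        apply Finset.sum_congr rfl
        intro i _
        rw [Finset.sum_congr rfl fun x _ => inner_sum i x]
        rw [Finset.sum_ite, Finset.sum_const, Finset.sum_const]
        have c1 := aS_eq (n := n) i
        have hpart := Finset.card_filter_add_card_filter_not
          (s := (univ : Finset (LV n))) (p := fun y : LV n => y.1 i = true)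
        rw [Finset.card_univ] at hpart
        have hle : acount n i ≤ Fintype.card (LV n) := by omega
        have : (univ.filter fun x : LV n => ¬x.1 i = true).card
            = Fintype.card (LV n) - acount n i := by omega
        rw [c1, this]
        simp only [smul_eq_mul]
        have h2 : acount n i * (Fintype.card (LV n) - acount n i)
            + (Fintype.card (LV n) - acount n i) * acount n i
            = 2 * acount n i * (Fintype.card (LV n) - acount n i) := by ring
        linarith [h2]

end LucasAux

namespace LucasAux

open Finset

variable {n : ℕ}

lemma count_triples {x y : LV n} (hxy : x ≠ y) :
    ((univ.powersetCard 3).filter fun S : Finset (LV n) => x ∈ S ∧ y ∈ S).card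
      = Fintype.card (LV n) - 2 := by
  classical
  have hA : (univ \ {x, y} : Finset (LV n)).card = Fintype.card (LV n) - 2 := by
    rw [Finset.card_sdiff_of_subset (Finset.subset_univ _), Finset.card_univ, Finset.card_pair hxy]
  rw [← hA]
  symm
  apply Finset.card_bij (fun z _ => insert x (insert y ({z} : Finset (LV n))))
  · intro z hz
    rw [Finset.mem_sdiff] at hz
    have hzx : z ≠ x := fun h => hz.2 (by simp [h])
    have hzy : z ≠ y := fun h => hz.2 (by simp [h])
    rw [Finset.mem_filter, Finset.mem_powersetCard]
    refine ⟨⟨Finset.subset_univ _, ?_⟩, by simp, by simp⟩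
    rw [Finset.card_insert_of_notMem (by simp [hxy, hzx.symm]),
      Finset.card_insert_of_notMem (by simp [hzy.symm]), Finset.card_singleton]
  · intro z hz z' hz' h
    rw [Finset.mem_sdiff] at hz hz'
    have hzx : z ≠ x := fun hh => hz.2 (by simp [hh])
    have hzy : z ≠ y := fun hh => hz.2 (by simp [hh])
    have : z ∈ insert x (insert y ({z'} : Finset (LV n))) := by
      rw [← h]; simp
    simpa [hzx, hzy] using this
  · intro S hS
    rw [Finset.mem_filter, Finset.mem_powersetCard] at hS
    obtain ⟨⟨-, hcard⟩, hx, hy⟩ := hS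
    have hsub : ({x, y} : Finset (LV n)) ⊆ S := by
      intro a ha
      rcases Finset.mem_insert.mp ha with h | h
      · exact h ▸ hx
      · exact (Finset.mem_singleton.mp h) ▸ hy
    have hdiff : (S \ {x, y}).card = 1 := by
      rw [Finset.card_sdiff_of_subset hsub, hcard, Finset.card_pair hxy]
    obtain ⟨z, hz⟩ := Finset.card_eq_one.mp hdiff
    have hzmem : z ∈ S \ {x, y} := hz ▸ Finset.mem_singleton_self z
    rw [Finset.mem_sdiff] at hzmem
    refine ⟨z, Finset.mem_sdiff.mpr ⟨Finset.mem_univ _, hzmem.2⟩, ?_⟩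
    ext a
    simp only [Finset.mem_insert, Finset.mem_singleton]
    constructor
    · rintro (rfl | rfl | rfl)
      · exact hx
      · exact hy
      · exact hzmem.1
    · intro ha
      by_cases hax : a = x
      · exact Or.inl hax
      by_cases hay : a = y
      · exact Or.inr (Or.inl hay)
      · have : a ∈ S \ {x, y} := Finset.mem_sdiff.mpr ⟨ha, by simp [hax, hay]⟩
        rw [hz, Finset.mem_singleton] at this
        exact Or.inr (Or.inr this)

lemma sum_triples :
    ∑ S ∈ (univ : Finset (LV n)).powersetCard 3, (∑ x ∈ S, ∑ y ∈ S, ham x.1 y.1)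
      = (Fintype.card (LV n) - 2) * ∑ x : LV n, ∑ y : LV n, ham x.1 y.1 := by
  classical
  have step1 : ∀ S : Finset (LV n), (∑ x ∈ S, ∑ y ∈ S, ham x.1 y.1)
      = ∑ x : LV n, ∑ y : LV n, (if x ∈ S ∧ y ∈ S then ham x.1 y.1 else 0) := by
    intro S
    have inner : ∀ x : LV n, (∑ y : LV n, if x ∈ S ∧ y ∈ S then ham x.1 y.1 else 0)
        = if x ∈ S then ∑ y ∈ S, ham x.1 y.1 else 0 := by
      intro x
      by_cases hx : x ∈ S
      · rw [if_pos hx]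
        rw [show (∑ y : LV n, if x ∈ S ∧ y ∈ S then ham x.1 y.1 else 0)
            = ∑ y : LV n, if y ∈ S then ham x.1 y.1 else 0 from
          Finset.sum_congr rfl fun y _ => by simp [hx]]
        rw [Finset.sum_ite_mem, Finset.univ_inter]
      · rw [if_neg hx]
        rw [Finset.sum_eq_zero]
        intro y _
        rw [if_neg (fun hc => hx hc.1)]
    rw [Finset.sum_congr rfl fun x _ => inner x, Finset.sum_ite_mem, Finset.univ_inter]
  rw [Finset.sum_congr rfl fun S _ => step1 S]
  rw [Finset.sum_comm]
  rw [Finset.mul_sum]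
  apply Finset.sum_congr rfl
  intro x _
  rw [Finset.sum_comm]
  rw [Finset.mul_sum]
  apply Finset.sum_congr rfl
  intro y _
  rw [← Finset.sum_filter]
  rw [Finset.sum_const, smul_eq_mul]
  by_cases hxy : x = y
  · subst hxy
    rw [ham_self, mul_zero, mul_zero]
  · rw [count_triples hxy]

lemma four_dS (S : Finset (LV n)) (hS : S ∈ (univ : Finset (LV n)).powersetCard 3) :
    4 * steinerDist (lucasCube n) (S : Set (LV n)) = ∑ x ∈ S, ∑ y ∈ S, ham x.1 y.1 := by
  rw [Finset.mem_powersetCard] at hS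
  obtain ⟨u, v, w, huv, huw, hvw, rfl⟩ := Finset.card_eq_three.mp hS.2
  have hco : (({u, v, w} : Finset (LV n)) : Set (LV n)) = ({u, v, w} : Set (LV n)) := by
    simp
  rw [hco, steinerDist_triple]
  have expand : ∀ f : LV n → ℕ, ∑ x ∈ ({u, v, w} : Finset (LV n)), f x = f u + (f v + f w) := by
    intro f
    rw [Finset.sum_insert (by simp [huv, huw]), Finset.sum_insert (by simp [hvw]),
      Finset.sum_singleton]
  rw [expand]
  rw [expand (fun y => ham u.1 y.1), expand (fun y => ham v.1 y.1),
    expand (fun y => ham w.1 y.1)]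
  have h2 := two_splitcount u.1 v.1 w.1
  have c1 := ham_comm u.1 v.1
  have c2 := ham_comm u.1 w.1
  have c3 := ham_comm v.1 w.1
  have s1 := ham_self u.1
  have s2 := ham_self v.1
  have s3 := ham_self w.1
  omega

end LucasAux


open LucasAux

/-- For any `n ≥ 1`, the Steiner 3-Wiener index of the Lucas cube satisfies
`SW_3(Λ_n) = (n/2)·F_{n−1}·F_{n+1}·(L_n − 2)`. -/
theorem steinerWiener_three_lucasCube (n : ℕ) (hn : 1 ≤ n) :
    (steinerWiener (lucasCube n) 3 : ℝ) =
      ((n : ℝ) / 2) * (Nat.fib (n - 1) : ℝ) * (Nat.fib (n + 1) : ℝ) *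
        ((lucasNum n : ℝ) - 2) := by
  classical
  rcases Nat.lt_or_ge n 2 with h2 | h2
  · -- n = 1
    have hn1 : n = 1 := by omega
    subst hn1
    have hcard : Fintype.card (LV 1) = 1 := by
      rw [card_LV]
      decide
    have hps : (Finset.univ : Finset (LV 1)).powersetCard 3 = ∅ := by
      apply Finset.powersetCard_eq_empty.mpr
      rw [Finset.card_univ, hcard]
      omega
    unfold steinerWiener
    rw [hps, Finset.sum_empty]
    norm_num
  · -- n ≥ 2
    obtain ⟨m, rfl⟩ : ∃ m, n = m + 2 := ⟨n - 2, by omega⟩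
    set N := Fintype.card (LV (m + 2)) with hNdef
    have hN : N = Nat.fib (m + 3) + Nat.fib (m + 1) := by
      rw [hNdef, card_LV, Ncount_eq' (by omega)]
      congr 1 <;> exact congrArg Nat.fib (by omega)
    have ha : ∀ i : Fin (m + 2), acount (m + 2) i = Nat.fib (m + 1) := by
      intro i
      rw [acount_eq (by omega) i]
      exact congrArg Nat.fib (by omega)
    have key : 4 * steinerWiener (lucasCube (m + 2)) 3
        = (N - 2) * ((m + 2) * (2 * Nat.fib (m + 1) * Nat.fib (m + 3))) := by
      unfold steinerWiener
      rw [Finset.mul_sum]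
      rw [Finset.sum_congr rfl fun S hS => four_dS S hS]
      rw [sum_triples]
      rw [pair_sum_eq]
      have e4 : ∀ i : Fin (m + 2), 2 * acount (m + 2) i * (N - acount (m + 2) i)
          = 2 * Nat.fib (m + 1) * Nat.fib (m + 3) := by
        intro i
        rw [ha i]
        have : N - Nat.fib (m + 1) = Nat.fib (m + 3) := by omega
        rw [this]
      rw [Finset.sum_congr rfl fun i _ => e4 i]
      rw [Finset.sum_const, Finset.card_univ, Fintype.card_fin, smul_eq_mul]
    -- pass to the reals
    have hN2 : 2 ≤ N := by
      have : Nat.fib 3 ≤ Nat.fib (m + 3) := Nat.fib_mono (by omega)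
      have h3 : Nat.fib 3 = 2 := rfl
      omega
    have hL : lucasNum (m + 2) = N := by
      have := lucasNum_eq (m + 1)
      rw [hN]
      rw [show m + 1 + 1 = m + 2 from by omega] at this
      rw [this]
    have hreal := congrArg (fun t : ℕ => (t : ℝ)) key
    push_cast [Nat.cast_sub hN2] at hreal
    have hfib1 : ((Nat.fib (m + 2 - 1) : ℕ) : ℝ) = (Nat.fib (m + 1) : ℝ) := by
      norm_num
    have hfib2 : ((Nat.fib (m + 2 + 1) : ℕ) : ℝ) = (Nat.fib (m + 3) : ℝ) := by
      norm_num
    have hLcast : (lucasNum (m + 2) : ℝ) = (N : ℝ) := by exact_mod_cast hL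
    rw [hfib1, hfib2, hLcast]
    push_cast
    linear_combination (1/4 : ℝ) * hreal
end

section
/- Let G be a connected block graph with blocks B_1, B_2, ..., B_t. Then the number nm(G) of non-modular triples of vertices of G equals Σ_{i=1}^{t} N_3(G ∖ B_i), where G ∖ B_i denotes the graph obtained from G by deleting all edges of block B_i. -/
/-- The interval `I(u,v)`: the set of all vertices lying on shortest `u,v`-paths. -/
def interval {V : Type*} (G : SimpleGraph V) (u v : V) : Set V :=
  {x | G.dist u x + G.dist x v = G.dist u v}
/-- `v` is a cut vertex of `H`: `H` is connected and deleting `v` leaves a nonempty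
disconnected graph. -/
def IsCutVertex {V : Type*} (H : SimpleGraph V) (v : V) : Prop :=
  H.Connected ∧ ({w : V | w ≠ v}).Nonempty ∧ ¬(H.induce {w : V | w ≠ v}).Connected

/-- `B` is a block of `G`: a maximal set of vertices inducing a connected subgraph
having no cut vertices. -/
def IsBlock {V : Type*} (G : SimpleGraph V) (B : Set V) : Prop :=
  B.Nonempty ∧ (G.induce B).Connected ∧ (∀ v : B, ¬IsCutVertex (G.induce B) v) ∧
    ∀ C : Set V, B ⊆ C → C.Nonempty → (G.induce C).Connected →
      (∀ v : C, ¬IsCutVertex (G.induce C) v) → B = C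

/-- The graph obtained from `G` by deleting all edges joining two vertices of `B`. -/
def deleteEdgesIn {V : Type*} (G : SimpleGraph V) (B : Set V) : SimpleGraph V where
  Adj u v := G.Adj u v ∧ ¬(u ∈ B ∧ v ∈ B)
  symm := ⟨fun _ _ h => ⟨h.1.symm, fun hc => h.2 ⟨hc.2, hc.1⟩⟩⟩
  loopless := ⟨fun _ h => G.irrefl h.1⟩

open scoped Classical in
/-- `N_3(H)`: the number of (unordered) triples of vertices of `H` lying in three
pairwise different connected components of `H`; this equals
`Σ_{{i,j,k}} n(H_i)·n(H_j)·n(H_k)` over triples of components. -/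
noncomputable def N3 {V : Type*} (H : SimpleGraph V) [Fintype V] : ℕ :=
  ((Finset.univ : Finset V).powersetCard 3 |>.filter fun S =>
    ∀ u ∈ S, ∀ v ∈ S, u ≠ v →
      H.connectedComponentMk u ≠ H.connectedComponentMk v).card

open scoped Classical in
/-- `nm(G)`: the number of non-modular (unordered) triples of vertices of `G`, i.e.
triples `{x,y,z}` of distinct vertices with `I(x,y) ∩ I(x,z) ∩ I(y,z) = ∅`. -/
noncomputable def nmTriples {V : Type*} (G : SimpleGraph V) [Fintype V] : ℕ :=
  ((Finset.univ : Finset V).powersetCard 3 |>.filter fun S =>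
    ∀ a ∈ S, ∀ b ∈ S, ∀ c ∈ S, a ≠ b → a ≠ c → b ≠ c →
      interval G a b ∩ interval G a c ∩ interval G b c = ∅).card


open SimpleGraph

section Aux
variable {V : Type*} {G : SimpleGraph V}

lemma deleteEdgesIn_le (B : Set V) : deleteEdgesIn G B ≤ G := fun _ _ h => h.1

lemma interval_comm (u v : V) : interval G u v = interval G v u := by
  ext x; simp only [interval, Set.mem_setOf_eq]
  rw [dist_comm (u := u) (v := x), dist_comm (u := x) (v := v), dist_comm (u := u) (v := v)]
  omega

lemma left_mem_interval (u v : V) : u ∈ interval G u v := by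
  simp [interval, dist_self]

lemma right_mem_interval (u v : V) : v ∈ interval G u v := by
  simp [interval, dist_self]

lemma clique_dist_le_one {B : Set V} (hB : G.IsClique B) {p q : V} (hp : p ∈ B) (hq : q ∈ B) :
    G.dist p q ≤ 1 := by
  rcases eq_or_ne p q with rfl | h
  · simp [dist_self]
  · exact le_of_eq ((dist_eq_one_iff_adj).2 (hB hp hq h))

lemma interval_trans (hG : G.Connected) {u v b m : V} (hb : b ∈ interval G u v)
    (hm : m ∈ interval G u b) : m ∈ interval G u v := by
  simp only [interval, Set.mem_setOf_eq] at *
  have h1 := hG.dist_triangle (u := m) (v := b) (w := v)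
  have h2 := hG.dist_triangle (u := u) (v := m) (w := v)
  omega

/-- Key walk lemma: a geodesic crosses a clique `B` at most once. -/
lemma key_walk (hG : G.Connected) {B : Set V} (hB : G.IsClique B) :
    ∀ {u v : V} (W : G.Walk u v), W.length = G.dist u v →
    (deleteEdgesIn G B).Reachable u v ∨
    ∃ p q : V, p ∈ B ∧ q ∈ B ∧ p ≠ q ∧ (deleteEdgesIn G B).Reachable u p ∧
      (deleteEdgesIn G B).Reachable q v ∧
      G.dist u p + G.dist p v = G.dist u v ∧
      G.dist u q + G.dist q v = G.dist u v ∧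
      G.dist u p + 1 + G.dist q v = G.dist u v := by
  intro u v W
  induction W with
  | nil => intro _; exact Or.inl (Reachable.refl _)
  | @cons u u₁ v h rest ih =>
    intro hlen
    simp only [SimpleGraph.Walk.length_cons] at hlen
    have hd1 : G.dist u u₁ = 1 := dist_eq_one_iff_adj.2 h
    have hrestlen : rest.length = G.dist u₁ v := by
      have h1 : G.dist u₁ v ≤ rest.length := dist_le rest
      have h2 : G.dist u v ≤ G.dist u u₁ + G.dist u₁ v := hG.dist_triangle
      omega
    have hstep : G.dist u v = 1 + G.dist u₁ v := by
      have h2 : G.dist u v ≤ G.dist u u₁ + G.dist u₁ v := hG.dist_triangle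
      omega
    by_cases hBe : u ∈ B ∧ u₁ ∈ B
    · -- first edge is a B-edge
      rcases ih hrestlen with hreach | ⟨p, q, hpB, hqB, hpq, hup, hqv, e1, e2, e3⟩
      · have hz : G.dist u u = 0 := dist_self
        exact Or.inr ⟨u, u₁, hBe.1, hBe.2, G.ne_of_adj h, Reachable.refl _, hreach,
          by omega, by omega, by omega⟩
      · exfalso
        have huq : G.dist u q ≤ 1 := clique_dist_le_one hB hBe.1 hqB
        have htr : G.dist u v ≤ G.dist u q + G.dist q v := hG.dist_triangle
        omega
    · -- first edge survives in G ∖ B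
      have hadj : (deleteEdgesIn G B).Adj u u₁ := ⟨h, hBe⟩
      rcases ih hrestlen with hreach | ⟨p, q, hpB, hqB, hpq, hup, hqv, e1, e2, e3⟩
      · exact Or.inl (hadj.reachable.trans hreach)
      · refine Or.inr ⟨p, q, hpB, hqB, hpq, hadj.reachable.trans hup, hqv, ?_, ?_, ?_⟩
        · have t1 : G.dist u p ≤ G.dist u u₁ + G.dist u₁ p := hG.dist_triangle
          have t2 : G.dist u v ≤ G.dist u p + G.dist p v := hG.dist_triangle
          omega
        · have hpq1 : G.dist p q ≤ 1 := clique_dist_le_one hB hpB hqB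
          have t1 : G.dist u q ≤ G.dist u u₁ + G.dist u₁ q := hG.dist_triangle
          have t1' : G.dist u₁ q ≤ G.dist u₁ p + G.dist p q := hG.dist_triangle
          have t2 : G.dist u v ≤ G.dist u q + G.dist q v := hG.dist_triangle
          omega
        · have hpq1 : G.dist p q ≤ 1 := clique_dist_le_one hB hpB hqB
          have t1 : G.dist u p ≤ G.dist u u₁ + G.dist u₁ p := hG.dist_triangle
          have t2 : G.dist u v ≤ G.dist u p + G.dist p q + G.dist q v := by
            have a := hG.dist_triangle (u := u) (v := p) (w := v)
            have b := hG.dist_triangle (u := p) (v := q) (w := v)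
            omega
          omega

/-- Gate lemma: if `u` can't reach `v` avoiding `B`-edges, there are gates in `B`. -/
lemma gate_lemma (hG : G.Connected) {B : Set V} (hB : G.IsClique B) {u v : V}
    (hnr : ¬ (deleteEdgesIn G B).Reachable u v) :
    ∃ p q : V, p ∈ B ∧ q ∈ B ∧ p ≠ q ∧ (deleteEdgesIn G B).Reachable u p ∧
      (deleteEdgesIn G B).Reachable q v ∧
      G.dist u p + G.dist p v = G.dist u v ∧
      G.dist u q + G.dist q v = G.dist u v ∧
      G.dist u p + 1 + G.dist q v = G.dist u v := by
  obtain ⟨W, hW⟩ := hG.exists_walk_length_eq_dist u v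
  rcases key_walk hG hB W hW with h | h
  · exact absurd h hnr
  · exact h

/-- A vertex on a geodesic between `u` and `v` is `B`-avoiding-reachable from `u` or to `v`. -/
lemma interval_reach (hG : G.Connected) {B : Set V} (hB : G.IsClique B) {u v m : V}
    (hm : m ∈ interval G u v) :
    (deleteEdgesIn G B).Reachable u m ∨ (deleteEdgesIn G B).Reachable m v := by
  by_contra hcon
  push_neg at hcon
  obtain ⟨p1, q1, hp1B, hq1B, _, hup1, hq1m, _, _, e1⟩ := gate_lemma hG hB hcon.1
  obtain ⟨p2, q2, hp2B, hq2B, _, hmp2, hq2v, _, _, e2⟩ := gate_lemma hG hB hcon.2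
  simp only [interval, Set.mem_setOf_eq] at hm
  have hshort : G.dist u v ≤ G.dist u p1 + 1 + G.dist q2 v := by
    have h1 : G.dist p1 q2 ≤ 1 := clique_dist_le_one hB hp1B hq2B
    have a := hG.dist_triangle (u := u) (v := p1) (w := v)
    have b := hG.dist_triangle (u := p1) (v := q2) (w := v)
    omega
  omega

lemma induce_reachable_of_walk {S : Set V} {u w : V} (W : G.Walk u w)
    (hS : ∀ x ∈ W.support, x ∈ S) (hu : u ∈ S) (hw : w ∈ S) :
    (G.induce S).Reachable ⟨u, hu⟩ ⟨w, hw⟩ := by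
  induction W with
  | nil => exact Reachable.refl _
  | @cons a b c h rest ih =>
    have hb : b ∈ S := hS b (by simp)
    have hadj : (G.induce S).Adj ⟨a, hu⟩ ⟨b, hb⟩ := h
    exact hadj.reachable.trans (ih (fun x hx => hS x (by simp [hx])) hb hw)

lemma not_isCutVertex_of_connected {C : Set V} (v₀ : ↥C)
    (hconn : (G.induce (C \ {(v₀ : V)})).Connected) : ¬ IsCutVertex (G.induce C) v₀ := by
  rintro ⟨_, _, hncon⟩
  apply hncon
  let e : ↥(C \ {(v₀ : V)}) ≃ {w : ↥C // w ∈ {w : ↥C | w ≠ v₀}} :=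
    { toFun := fun x => ⟨⟨x.1, x.2.1⟩, fun hx => x.2.2 (congrArg Subtype.val hx)⟩
      invFun := fun y => ⟨y.1.1, ⟨y.1.2, fun h => y.2 (Subtype.ext h)⟩⟩
      left_inv := fun x => rfl
      right_inv := fun y => rfl }
  have iso : G.induce (C \ {(v₀ : V)}) ≃g (G.induce C).induce {w : ↥C | w ≠ v₀} :=
    { e with map_rel_iff' := Iff.rfl }
  exact iso.connected_iff.mp hconn

lemma endpoint_not_mem_support_takeUntil [DecidableEq V] {a b u : V} {P : G.Walk a b} (hP : P.IsPath)
    (h : u ∈ P.support) (hub : u ≠ b) : b ∉ (P.takeUntil u h).support := by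
  intro hc
  have hnodup := hP.support_nodup
  rw [← P.take_spec h, SimpleGraph.Walk.support_append] at hnodup
  have hdisj := List.disjoint_of_nodup_append hnodup
  have hbtail : b ∈ (P.dropUntil u h).support.tail := by
    have hb : b ∈ (P.dropUntil u h).support := SimpleGraph.Walk.end_mem_support _
    rw [SimpleGraph.Walk.support_eq_cons] at hb
    rcases hb with _ | hb
    · exact absurd rfl hub.symm
    · assumption
  exact hdisj hc hbtail

lemma start_not_mem_support_dropUntil [DecidableEq V] {a b u : V} {P : G.Walk a b} (hP : P.IsPath)
    (h : u ∈ P.support) (hua : u ≠ a) : a ∉ (P.dropUntil u h).support := by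
  intro hc
  have hnodup := hP.support_nodup
  rw [← P.take_spec h, SimpleGraph.Walk.support_append] at hnodup
  have hdisj := List.disjoint_of_nodup_append hnodup
  have hatail : a ∈ (P.dropUntil u h).support.tail := by
    rw [SimpleGraph.Walk.support_eq_cons] at hc
    rcases hc with _ | hc
    · exact absurd rfl hua.symm
    · assumption
  exact hdisj (SimpleGraph.Walk.start_mem_support _) hatail

/-- Two vertices of a block that are connected avoiding the block's edges are equal. -/
lemma support_eq_of_isPath_of_eq {a b : V} (P : G.Walk a b) (hP : P.IsPath) (h : a = b) :
    P.support = [a] := by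
  subst h
  rw [(SimpleGraph.Walk.isPath_iff_eq_nil).mp hP]
  rfl

lemma block_no_reach (hG : G.Connected) {B : Set V} (hblk : IsBlock G B) (hclq : G.IsClique B)
    {p₀ q₀ : V} (hp₀ : p₀ ∈ B) (hq₀ : q₀ ∈ B)
    (hr : (deleteEdgesIn G B).Reachable p₀ q₀) : p₀ = q₀ := by
  classical
  by_contra hne₀
  suffices H : ∀ n p q, p ∈ B → q ∈ B → p ≠ q →
      ∀ W : (deleteEdgesIn G B).Walk p q, W.IsPath → W.length = n → False by
    obtain ⟨W⟩ := hr
    exact H (W.toPath : (deleteEdgesIn G B).Walk p₀ q₀).length p₀ q₀ hp₀ hq₀ hne₀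
      W.toPath (W.toPath).2 rfl
  intro n
  induction n using Nat.strong_induction_on with
  | _ n ih =>
  intro p q hp hq hne W hWpath hWlen
  by_cases hex : ∃ w ∈ W.support, w ∈ B ∧ w ≠ p ∧ w ≠ q
  · obtain ⟨w, hwsup, hwB, hwp, hwq⟩ := hex
    have hlt : (W.takeUntil w hwsup).length < n := by
      have hle := W.length_takeUntil_le hwsup
      rcases lt_or_eq_of_le hle with h | h
      · omega
      · exfalso
        have hspec := W.take_spec hwsup
        have : (W.takeUntil w hwsup).length + (W.dropUntil w hwsup).length = W.length := by
          rw [← SimpleGraph.Walk.length_append, hspec]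
        have hz : (W.dropUntil w hwsup).length = 0 := by omega
        exact hwq (SimpleGraph.Walk.eq_of_length_eq_zero hz)
    exact ih _ hlt p w hp hwB hwp.symm (W.takeUntil w hwsup) (hWpath.takeUntil hwsup) rfl
  · -- no internal vertex of the path lies in B; build a bigger block
    have hEdges : ∀ e ∈ W.edges, e ∈ G.edgeSet := fun e he =>
      SimpleGraph.edgeSet_mono (deleteEdgesIn_le B) (SimpleGraph.Walk.edges_subset_edgeSet W he)
    set WG : G.Walk p q := W.transfer G hEdges with hWGdef
    have hsupWG : WG.support = W.support := SimpleGraph.Walk.support_transfer _ _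
    have hWGpath : WG.IsPath := by
      rw [SimpleGraph.Walk.isPath_def, hsupWG]
      exact hWpath.support_nodup
    set C : Set V := B ∪ {x | x ∈ W.support} with hCdef
    have hBC : B ⊆ C := Set.subset_union_left
    have hsupC : ∀ x ∈ W.support, x ∈ C := fun x hx => Or.inr hx
    -- connectivity of the induced graph on C
    have hCconn : (G.induce C).Connected := by
      rw [connected_iff_exists_forall_reachable]
      refine ⟨⟨p, hBC hp⟩, ?_⟩
      rintro ⟨u, hu⟩
      rcases hu with huB | husup
      · rcases eq_or_ne p u with rfl | hpu
        · exact Reachable.refl _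
        · exact (SimpleGraph.Adj.reachable (by exact hclq hp huB hpu :
            (G.induce C).Adj ⟨p, hBC hp⟩ ⟨u, Or.inl huB⟩))
      · have husup' : u ∈ WG.support := by rw [hsupWG]; exact husup
        have hsub : ∀ x ∈ (WG.takeUntil u husup').support, x ∈ C := by
          intro x hx
          apply hsupC
          rw [← hsupWG]
          exact SimpleGraph.Walk.support_takeUntil_subset _ _ hx
        exact induce_reachable_of_walk (WG.takeUntil u husup') hsub (hBC hp) _
    -- no cut vertices in the induced graph on C
    have hCcut : ∀ v₀ : ↥C, ¬ IsCutVertex (G.induce C) v₀ := by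
      intro v₀
      apply not_isCutVertex_of_connected
      set v : V := (v₀ : V)
      set S : Set V := C \ {v} with hSdef
      obtain ⟨r, hrB, hrv⟩ : ∃ r, r ∈ B ∧ r ≠ v := by
        by_cases hvp : p = v
        · exact ⟨q, hq, fun hc => hne (hvp.trans hc.symm)⟩
        · exact ⟨p, hp, hvp⟩
      have hrS : r ∈ S := ⟨hBC hrB, hrv⟩
      have claimA : ∀ u (hu : u ∈ B) (huv : u ≠ v),
          (G.induce S).Reachable ⟨u, ⟨hBC hu, huv⟩⟩ ⟨r, hrS⟩ := by
        intro u hu huv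
        rcases eq_or_ne u r with rfl | hur
        · exact Reachable.refl _
        · exact (SimpleGraph.Adj.reachable (by exact hclq hu hrB hur :
            (G.induce S).Adj ⟨u, ⟨hBC hu, huv⟩⟩ ⟨r, hrS⟩))
      rw [connected_iff_exists_forall_reachable]
      refine ⟨⟨r, hrS⟩, ?_⟩
      rintro ⟨u, huC', huv'⟩
      have huv : u ≠ v := huv'
      have huC'' : u ∈ C := huC'
      have hucase : u ∈ C := huC'
      refine Reachable.symm ?_
      rcases hucase with huB | husup
      · exact claimA u huB huv
      · -- u on the path
        have husup' : u ∈ WG.support := by rw [hsupWG]; exact husup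
        by_cases hvsup : v ∈ WG.support
        · -- split the path at v
          set W1 := WG.takeUntil v hvsup with hW1def
          set W2 := WG.dropUntil v hvsup with hW2def
          have hW1path : W1.IsPath := hWGpath.takeUntil hvsup
          have hW2path : W2.IsPath := hWGpath.dropUntil hvsup
          have hmem : u ∈ W1.support ∨ u ∈ W2.support.tail := by
            have : u ∈ W1.support ++ W2.support.tail := by
              rw [← SimpleGraph.Walk.support_append, WG.take_spec hvsup]; exact husup'
            exact List.mem_append.mp this
          rcases hmem with hu1 | hu2
          · -- u on the first part, walk back to p
            have hpv : p ≠ v := by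
              intro hpv0
              have hW1sup : W1.support = [p] := support_eq_of_isPath_of_eq W1 hW1path hpv0
              rw [hW1sup] at hu1
              simp at hu1
              exact huv (hu1 ▸ hpv0)
            have hvW4 : v ∉ (W1.takeUntil u hu1).support :=
              endpoint_not_mem_support_takeUntil hW1path hu1 huv
            have hsub : ∀ x ∈ (W1.takeUntil u hu1).support, x ∈ S := by
              intro x hx
              refine ⟨hsupC x ?_, fun hxv => hvW4 (Set.mem_singleton_iff.mp hxv ▸ hx)⟩
              rw [← hsupWG]
              exact SimpleGraph.Walk.support_takeUntil_subset _ _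
                (SimpleGraph.Walk.support_takeUntil_subset _ _ hx)
            exact (induce_reachable_of_walk (W1.takeUntil u hu1) hsub ⟨hBC hp, hpv⟩
              ⟨huC'', huv⟩).symm.trans (claimA p hp hpv)
          · -- u on the second part, walk forward to q
            have hu2' : u ∈ W2.support := List.mem_of_mem_tail hu2
            have hqv : q ≠ v := by
              intro hqv0
              have hW2sup : W2.support = [v] := support_eq_of_isPath_of_eq W2 hW2path hqv0.symm
              rw [hW2sup] at hu2
              simp at hu2
            have hvW5 : v ∉ (W2.dropUntil u hu2').support :=
              start_not_mem_support_dropUntil hW2path hu2' huv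
            have hsub : ∀ x ∈ (W2.dropUntil u hu2').support, x ∈ S := by
              intro x hx
              refine ⟨hsupC x ?_, fun hxv => hvW5 (Set.mem_singleton_iff.mp hxv ▸ hx)⟩
              rw [← hsupWG]
              exact SimpleGraph.Walk.support_dropUntil_subset _ _
                (SimpleGraph.Walk.support_dropUntil_subset _ _ hx)
            exact (induce_reachable_of_walk (W2.dropUntil u hu2') hsub ⟨huC'', huv⟩
              ⟨hBC hq, hqv⟩).trans (claimA q hq hqv)
        · -- v not on the path: walk forward to q
          have hqv : q ≠ v := fun hc => hvsup (by rw [← hc]; exact SimpleGraph.Walk.end_mem_support _)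
          have hsub : ∀ x ∈ (WG.dropUntil u husup').support, x ∈ S := by
            intro x hx
            have hxW : x ∈ WG.support := SimpleGraph.Walk.support_dropUntil_subset _ _ hx
            refine ⟨hsupC x (by rwa [hsupWG] at hxW),
              fun hxv => hvsup (Set.mem_singleton_iff.mp hxv ▸ hxW)⟩
          exact (induce_reachable_of_walk (WG.dropUntil u husup') hsub ⟨huC'', huv⟩
            ⟨hBC hq, hqv⟩).trans (claimA q hq hqv)
    -- maximality forces C = B, contradiction
    have hmax : B = C := hblk.2.2.2 C hBC ⟨p, hBC hp⟩ hCconn hCcut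
    -- the second vertex of W is not in B but is in C
    cases W with
    | nil => exact hne rfl
    | cons h rest =>
      have hxC : _ ∈ C := hsupC _
        ((SimpleGraph.Walk.support_cons h rest) ▸ List.mem_cons_of_mem _ rest.start_mem_support)
      rw [← hmax] at hxC
      exact h.2 ⟨hp, hxC⟩

lemma induce_singleton_connected (G : SimpleGraph V) (x : V) : (G.induce {x}).Connected := by
  rw [connected_iff_exists_forall_reachable]
  refine ⟨⟨x, rfl⟩, ?_⟩
  rintro ⟨y, hy⟩
  have : y = x := hy
  subst this
  exact Reachable.refl _

lemma induce_pair_connected (G : SimpleGraph V) {a b : V} (hadj : G.Adj a b) :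
    (G.induce {a, b}).Connected := by
  rw [connected_iff_exists_forall_reachable]
  refine ⟨⟨a, Or.inl rfl⟩, ?_⟩
  rintro ⟨y, hy⟩
  rcases hy with h | h
  · subst h; exact Reachable.refl _
  · subst h
    exact (SimpleGraph.Adj.reachable (by exact hadj :
      (G.induce {a, y}).Adj ⟨a, Or.inl rfl⟩ ⟨y, Or.inr rfl⟩))

lemma exists_block_of_edge [Finite V] {a b : V} (hadj : G.Adj a b) :
    ∃ B : Set V, IsBlock G B ∧ a ∈ B ∧ b ∈ B := by
  classical
  set 𝒮 : Set (Set V) := {C | a ∈ C ∧ b ∈ C ∧ (G.induce C).Connected ∧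
    ∀ v : C, ¬IsCutVertex (G.induce C) v} with h𝒮
  have hne : a ≠ b := G.ne_of_adj hadj
  have hpair : ({a, b} : Set V) ∈ 𝒮 := by
    refine ⟨Or.inl rfl, Or.inr rfl, induce_pair_connected G hadj, ?_⟩
    rintro ⟨v, hv⟩
    apply not_isCutVertex_of_connected
    rcases hv with h | h
    · subst h
      rw [Set.pair_diff_left hne]
      exact induce_singleton_connected G b
    · subst h
      rw [Set.pair_diff_right hne]
      exact induce_singleton_connected G a
  obtain ⟨B, hB𝒮, hBmax⟩ := Set.Finite.exists_maximalFor id 𝒮 (Set.toFinite 𝒮) ⟨_, hpair⟩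
  refine ⟨B, ⟨⟨a, hB𝒮.1⟩, hB𝒮.2.2.1, hB𝒮.2.2.2, ?_⟩, hB𝒮.1, hB𝒮.2.1⟩
  intro C hBC hCne hCconn hCcut
  exact Set.Subset.antisymm hBC (hBmax ⟨hBC hB𝒮.1, hBC hB𝒮.2.1, hCconn, hCcut⟩ hBC)

/-- Direction A: a triple separated by a block-clique is non-modular. -/
lemma empty_of_sep (hG : G.Connected) {B : Set V} (hB : G.IsClique B) {x y z : V}
    (hxy : ¬(deleteEdgesIn G B).Reachable x y) (hxz : ¬(deleteEdgesIn G B).Reachable x z)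
    (hyz : ¬(deleteEdgesIn G B).Reachable y z) :
    interval G x y ∩ interval G x z ∩ interval G y z = ∅ := by
  by_contra h
  obtain ⟨m, ⟨hm1, hm2⟩, hm3⟩ := Set.nonempty_iff_ne_empty.mpr h
  rcases interval_reach hG hB hm1 with r1 | r1 <;>
  rcases interval_reach hG hB hm2 with r2 | r2 <;>
  rcases interval_reach hG hB hm3 with r3 | r3
  all_goals first
  | exact hxy (r1.trans r3.symm)
  | exact hxz (r1.trans r3)
  | exact hxz (r1.trans r2)
  | exact hxy (r2.trans r1.symm)
  | exact hxz (r2.trans r3)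
  | exact hyz (r1.symm.trans r2)
  | exact hxy (r2.trans r1)

/-- Uniqueness of the separating block. -/
lemma sep_unique (hG : G.Connected) {B B' : Set V} (hblkB : IsBlock G B)
    (hclqB : G.IsClique B) (hclqB' : G.IsClique B') {x y z : V}
    (hxy : ¬(deleteEdgesIn G B).Reachable x y) (hxz : ¬(deleteEdgesIn G B).Reachable x z)
    (hyz : ¬(deleteEdgesIn G B).Reachable y z)
    (hxy' : ¬(deleteEdgesIn G B').Reachable x y) (hxz' : ¬(deleteEdgesIn G B').Reachable x z)
    (hyz' : ¬(deleteEdgesIn G B').Reachable y z) : B = B' := by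
  obtain ⟨gx, gy, hgxB, hgyB, _, hRxgx, hRgyy, exy1, exy2, _⟩ := gate_lemma hG hclqB hxy
  obtain ⟨gx2, gz, hgx2B, hgzB, _, hRxgx2, hRgzz, exz1, exz2, _⟩ := gate_lemma hG hclqB hxz
  obtain ⟨gy2, gz2, hgy2B, hgz2B, _, hRygy2, hRgz2z, eyz1, eyz2, _⟩ := gate_lemma hG hclqB hyz
  have hRygy : (deleteEdgesIn G B).Reachable y gy := hRgyy.symm
  have hRzgz : (deleteEdgesIn G B).Reachable z gz := hRgzz.symm
  have hgx2eq : gx2 = gx := block_no_reach hG hblkB hclqB hgx2B hgxB (hRxgx2.symm.trans hRxgx)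
  have hgy2eq : gy2 = gy := block_no_reach hG hblkB hclqB hgy2B hgyB (hRygy2.symm.trans hRygy)
  have hgz2eq : gz2 = gz := block_no_reach hG hblkB hclqB hgz2B hgzB (hRgz2z.trans hRgzz.symm)
  rw [hgx2eq] at exz1
  rw [hgy2eq] at eyz1
  rw [hgz2eq] at eyz2
  -- the three gates, as interval members
  have hgxIxy : gx ∈ interval G x y := exy1
  have hgxIxz : gx ∈ interval G x z := exz1
  have hgyIxy : gy ∈ interval G x y := exy2
  have hgyIyz : gy ∈ interval G y z := eyz1
  have hgzIxz : gz ∈ interval G x z := exz2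
  have hgzIyz : gz ∈ interval G y z := eyz2
  -- distinctness
  have hxyne : gx ≠ gy := fun h => hxy (hRxgx.trans (h ▸ hRgyy))
  have hxzne : gx ≠ gz := fun h => hxz (hRxgx.trans (h ▸ hRgzz))
  have hyzne : gy ≠ gz := fun h => hyz (hRygy.trans (h ▸ hRgzz))
  -- locate the gates in G ∖ B'
  have hR'x : (deleteEdgesIn G B').Reachable x gx := by
    rcases interval_reach hG hclqB' hgxIxy with h1 | h1
    · exact h1
    · rcases interval_reach hG hclqB' hgxIxz with h2 | h2
      · exact h2
      · exact absurd (h1.symm.trans h2) hyz'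
  have hR'y : (deleteEdgesIn G B').Reachable y gy := by
    rcases interval_reach hG hclqB' hgyIyz with h1 | h1
    · exact h1
    · rcases interval_reach hG hclqB' hgyIxy with h2 | h2
      · exact absurd (h2.trans h1) hxz'
      · exact h2.symm
  have hR'z : (deleteEdgesIn G B').Reachable z gz := by
    rcases interval_reach hG hclqB' hgzIxz with h1 | h1
    · rcases interval_reach hG hclqB' hgzIyz with h2 | h2
      · exact absurd (h1.trans h2.symm) hxy'
      · exact h2.symm
    · exact h1.symm
  -- the gates lie in B'
  have hpairxy : gx ∈ B' ∧ gy ∈ B' := by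
    by_contra h
    exact hxy' (hR'x.trans ((SimpleGraph.Adj.reachable
      (⟨hclqB hgxB hgyB hxyne, h⟩ : (deleteEdgesIn G B').Adj gx gy)).trans hR'y.symm))
  have hpairxz : gx ∈ B' ∧ gz ∈ B' := by
    by_contra h
    exact hxz' (hR'x.trans ((SimpleGraph.Adj.reachable
      (⟨hclqB hgxB hgzB hxzne, h⟩ : (deleteEdgesIn G B').Adj gx gz)).trans hR'z.symm))
  apply Set.Subset.antisymm
  · intro w hwB
    by_contra hwB'
    have hwgx : w ≠ gx := fun h => hwB' (h ▸ hpairxy.1)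
    have hwgy : w ≠ gy := fun h => hwB' (h ▸ hpairxy.2)
    have r1 : (deleteEdgesIn G B').Reachable w gx :=
      SimpleGraph.Adj.reachable ⟨hclqB hwB hgxB hwgx, fun hc => hwB' hc.1⟩
    have r2 : (deleteEdgesIn G B').Reachable w gy :=
      SimpleGraph.Adj.reachable ⟨hclqB hwB hgyB hwgy, fun hc => hwB' hc.1⟩
    exact hxy' (hR'x.trans ((r1.symm.trans r2).trans hR'y.symm))
  · intro w hwB'
    by_contra hwB
    have hwgx : w ≠ gx := fun h => hwB (h ▸ hgxB)
    have hwgy : w ≠ gy := fun h => hwB (h ▸ hgyB)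
    have r1 : (deleteEdgesIn G B).Reachable w gx :=
      SimpleGraph.Adj.reachable ⟨hclqB' hwB' hpairxy.1 hwgx, fun hc => hwB hc.1⟩
    have r2 : (deleteEdgesIn G B).Reachable w gy :=
      SimpleGraph.Adj.reachable ⟨hclqB' hwB' hpairxy.2 hwgy, fun hc => hwB hc.1⟩
    exact hxy (hRxgx.trans ((r1.symm.trans r2).trans hRgyy))

/-- Direction B with uniqueness packaged separately: every triple of distinct vertices is
either separated by some block or has a common interval vertex. -/
lemma modular_or_sep [Finite V] (hG : G.Connected)
    (hBG : ∀ S : Set V, IsBlock G S → G.IsClique S) :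
    ∀ (D : ℕ) (x y z : V), G.dist x y + G.dist x z + G.dist y z ≤ D →
      x ≠ y → x ≠ z → y ≠ z →
      (∃ Bl : Set V, IsBlock G Bl ∧ ¬(deleteEdgesIn G Bl).Reachable x y ∧
        ¬(deleteEdgesIn G Bl).Reachable x z ∧ ¬(deleteEdgesIn G Bl).Reachable y z) ∨
      (interval G x y ∩ interval G x z ∩ interval G y z).Nonempty := by
  intro D
  induction D using Nat.strong_induction_on with
  | _ D ih =>
  intro x y z hsum hxy hxz hyz
  obtain ⟨W, hW⟩ := hG.exists_walk_length_eq_dist x y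
  have hWnil : ¬ W.Nil := SimpleGraph.Walk.not_nil_of_ne hxy
  have hadj : G.Adj x (W.getVert 1) := W.adj_snd hWnil
  set x₁ := W.getVert 1 with hx₁def
  have hlen : W.tail.length + 1 = G.dist x y := by
    have h := congrArg SimpleGraph.Walk.length (W.cons_tail_eq hWnil)
    rw [SimpleGraph.Walk.length_cons, hW] at h
    exact h
  have hdxx₁ : G.dist x x₁ = 1 := dist_eq_one_iff_adj.mpr hadj
  have htailmin : W.tail.length = G.dist x₁ y := by
    have h1 : G.dist x₁ y ≤ W.tail.length := dist_le _
    have h2 : G.dist x y ≤ G.dist x x₁ + G.dist x₁ y := hG.dist_triangle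
    omega
  have hstep : G.dist x y = 1 + G.dist x₁ y := by
    have h2 : G.dist x y ≤ G.dist x x₁ + G.dist x₁ y := hG.dist_triangle
    omega
  obtain ⟨B, hblkB, hxB, hx₁B⟩ := exists_block_of_edge hadj
  have hclqB : G.IsClique B := hBG B hblkB
  have hxyB : ¬(deleteEdgesIn G B).Reachable x y := by
    intro hR
    rcases key_walk hG hclqB W.tail htailmin with h | ⟨p, q, hpB, hqB, hpq, hx₁p, hqy, f1, f2, f3⟩
    · exact hadj.ne (block_no_reach hG hblkB hclqB hxB hx₁B (hR.trans h.symm))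
    · have hdxq : G.dist x q ≤ 1 := clique_dist_le_one hclqB hxB hqB
      have htr : G.dist x y ≤ G.dist x q + G.dist q y := hG.dist_triangle
      rw [show W.snd = x₁ from rfl] at f1 f2 f3
      omega
  by_cases hxzB : (deleteEdgesIn G B).Reachable x z
  · -- z lies on the x-side of B: the gate of z towards y is x itself
    have hyzB : ¬(deleteEdgesIn G B).Reachable y z := fun h => hxyB (hxzB.trans h.symm)
    obtain ⟨gz3, gy3, hgz3B, hgy3B, _, hRzgz3, hRgy3y, e3a, _, _⟩ :=
      gate_lemma hG hclqB (fun h => hyzB h.symm)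
    have hgz3x : gz3 = x :=
      block_no_reach hG hblkB hclqB hgz3B hxB (hRzgz3.symm.trans hxzB.symm)
    rw [hgz3x] at e3a
    right
    refine ⟨x, ⟨left_mem_interval x y, left_mem_interval x z⟩, ?_⟩
    show G.dist y x + G.dist x z = G.dist y z
    have c1 : G.dist y x = G.dist x y := dist_comm
    have c2 : G.dist z x = G.dist x z := dist_comm
    have c3 : G.dist z y = G.dist y z := dist_comm
    omega
  · by_cases hyzB : (deleteEdgesIn G B).Reachable y z
    · -- z lies on the y-side of B
      obtain ⟨gx1, b1, hgx1B, hb1B, _, hRxgx1, hRb1y, f1a, f1b, _⟩ := gate_lemma hG hclqB hxyB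
      obtain ⟨gx2, b2, hgx2B, hb2B, _, hRxgx2, hRb2z, f2a, f2b, _⟩ := gate_lemma hG hclqB hxzB
      have hb21 : b2 = b1 :=
        block_no_reach hG hblkB hclqB hb2B hb1B (hRb2z.trans (hyzB.symm.trans hRb1y.symm))
      rw [hb21] at f2b hRb2z
      have hbIxy : b1 ∈ interval G x y := f1b
      have hbIxz : b1 ∈ interval G x z := f2b
      have hbx : b1 ≠ x := fun h => hxyB (h ▸ hRb1y)
      by_cases hby : b1 = y
      · right
        exact ⟨y, ⟨right_mem_interval x y, hby ▸ hbIxz⟩, left_mem_interval y z⟩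
      · by_cases hbz : b1 = z
        · right
          exact ⟨z, ⟨hbz ▸ hbIxy, right_mem_interval x z⟩, right_mem_interval y z⟩
        · -- recurse on (b1, y, z)
          have hdxb : G.dist x b1 = 1 := dist_eq_one_iff_adj.mpr (hclqB hxB hb1B hbx.symm)
          have hIxy' : G.dist x b1 + G.dist b1 y = G.dist x y := hbIxy
          have hIxz' : G.dist x b1 + G.dist b1 z = G.dist x z := hbIxz
          have hposxy : 0 < G.dist x y := hG.pos_dist_of_ne hxy
          have hposxz : 0 < G.dist x z := hG.pos_dist_of_ne hxz
          have hlt : G.dist b1 y + G.dist b1 z + G.dist y z < D := by omega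
          rcases ih _ hlt b1 y z le_rfl hby hbz hyz with ⟨B', hblkB', s1, s2, s3⟩ |
            ⟨m, ⟨hm1, hm2⟩, hm3⟩
          · left
            have hclqB' : G.IsClique B' := hBG B' hblkB'
            have hR'xb : (deleteEdgesIn G B').Reachable x b1 := by
              rcases interval_reach hG hclqB' hbIxy with h | h
              · exact h
              · exact absurd h s1
            exact ⟨B', hblkB', fun h => s1 (hR'xb.symm.trans h), fun h => s2 (hR'xb.symm.trans h), s3⟩
          · right
            have hbIyx : b1 ∈ interval G y x := (interval_comm x y) ▸ hbIxy
            have hbIzx : b1 ∈ interval G z x := (interval_comm x z) ▸ hbIxz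
            have hm1' : m ∈ interval G y b1 := (interval_comm b1 y) ▸ hm1
            have hm2' : m ∈ interval G z b1 := (interval_comm b1 z) ▸ hm2
            exact ⟨m, ⟨(interval_comm y x) ▸ interval_trans hG hbIyx hm1',
              (interval_comm z x) ▸ interval_trans hG hbIzx hm2'⟩, hm3⟩
    · exact Or.inl ⟨B, hblkB, hxyB, hxzB, hyzB⟩

end Aux

/-- For a connected block graph `G` with blocks `B_1, …, B_t`, the number of
non-modular triples of `G` equals `Σ_{i=1}^{t} N_3(G ∖ B_i)`, where `G ∖ B_i` is
obtained from `G` by deleting all edges of the block `B_i`. -/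
theorem nmTriples_blockGraph {V : Type*} (G : SimpleGraph V) [Fintype V]
    (hG : G.Connected) (hBG : ∀ S : Set V, IsBlock G S → G.IsClique S)
    (t : ℕ) (B : Fin t → Set V) (hinj : Function.Injective B)
    (hblocks : ∀ i, IsBlock G (B i))
    (hall : ∀ S : Set V, IsBlock G S → ∃ i, S = B i) :
    nmTriples G = ∑ i, N3 (deleteEdgesIn G (B i)) := by
  classical
  have ncomp : ∀ (H : SimpleGraph V) (u v : V), ¬H.Reachable u v →
      H.connectedComponentMk u ≠ H.connectedComponentMk v := by
    intro H u v h hEq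
    exact h ((SimpleGraph.ConnectedComponent.eq).mp hEq)
  have rcomp : ∀ (H : SimpleGraph V) (u v : V),
      H.connectedComponentMk u ≠ H.connectedComponentMk v → ¬H.Reachable u v := by
    intro H u v h hR
    exact h ((SimpleGraph.ConnectedComponent.eq).mpr hR)
  unfold nmTriples N3
  rw [← Finset.card_biUnion]
  · congr 1
    ext S
    simp only [Finset.mem_biUnion, Finset.mem_filter, Finset.mem_univ, true_and,
      Finset.mem_powersetCard_univ]
    constructor
    · rintro ⟨hS3, hP⟩
      obtain ⟨a, b, c, hab, hac, hbc, rfl⟩ := Finset.card_eq_three.mp hS3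
      have ha : a ∈ ({a, b, c} : Finset V) := by simp
      have hb : b ∈ ({a, b, c} : Finset V) := by simp
      have hc : c ∈ ({a, b, c} : Finset V) := by simp
      have hE := hP a ha b hb c hc hab hac hbc
      rcases modular_or_sep hG hBG (G.dist a b + G.dist a c + G.dist b c) a b c le_rfl
          hab hac hbc with ⟨Bl, hblkBl, s1, s2, s3⟩ | ⟨m, hm⟩
      · obtain ⟨i, hi⟩ := hall Bl hblkBl
        rw [hi] at s1 s2 s3
        refine ⟨i, hS3, ?_⟩
        intro u hu v hv huv
        simp only [Finset.mem_insert, Finset.mem_singleton] at hu hv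
        rcases hu with rfl | rfl | rfl <;> rcases hv with rfl | rfl | rfl <;>
          first
          | exact absurd rfl huv
          | exact ncomp _ _ _ s1
          | exact ncomp _ _ _ s2
          | exact ncomp _ _ _ s3
          | exact ncomp _ _ _ (fun h => s1 h.symm)
          | exact ncomp _ _ _ (fun h => s2 h.symm)
          | exact ncomp _ _ _ (fun h => s3 h.symm)
      · rw [hE] at hm
        exact absurd hm (Set.notMem_empty m)
    · rintro ⟨i, hS3, hQ⟩
      refine ⟨hS3, ?_⟩
      intro a ha b hb c hc hab hac hbc
      exact empty_of_sep hG (hBG (B i) (hblocks i))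
        (rcomp _ _ _ (hQ a ha b hb hab)) (rcomp _ _ _ (hQ a ha c hc hac))
        (rcomp _ _ _ (hQ b hb c hc hbc))
  · -- disjointness
    intro i _ j _ hij
    rw [Function.onFun, Finset.disjoint_left]
    intro S hSi hSj
    simp only [Finset.mem_filter, Finset.mem_powersetCard_univ] at hSi hSj
    obtain ⟨hS3, hQi⟩ := hSi
    obtain ⟨_, hQj⟩ := hSj
    obtain ⟨a, b, c, hab, hac, hbc, rfl⟩ := Finset.card_eq_three.mp hS3
    have ha : a ∈ ({a, b, c} : Finset V) := by simp
    have hb : b ∈ ({a, b, c} : Finset V) := by simp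
    have hc : c ∈ ({a, b, c} : Finset V) := by simp
    have hBij : B i = B j := sep_unique hG (hblocks i) (hBG (B i) (hblocks i))
      (hBG (B j) (hblocks j))
      (rcomp _ _ _ (hQi a ha b hb hab)) (rcomp _ _ _ (hQi a ha c hc hac))
      (rcomp _ _ _ (hQi b hb c hc hbc))
      (rcomp _ _ _ (hQj a ha b hb hab)) (rcomp _ _ _ (hQj a ha c hc hac))
      (rcomp _ _ _ (hQj b hb c hc hbc))
    exact hij (hinj hBij)
end
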